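/- Let c be a real number with 0 < c < 1, let k ≥ 1 be an integer, and let ℓ₁,…,ℓ_k be positive real numbers with mean ℓ̄ = (1/k) Σ_{i=1}^{k} ℓᵢ. Then −Σ_{i=1}^{k} log(1 − c^{ℓᵢ}) ≥ −k · log(1 − c^{ℓ̄}). -/
import Mathlib

open Finset in
/-- For `0 < c < 1`, an integer `k ≥ 1` and positive reals
`ℓ₁, …, ℓ_k` with mean `ℓ̄ = (1/k) ∑ᵢ ℓᵢ`, one has
`−∑ᵢ log(1 − c^{ℓᵢ}) ≥ −k · log(1 − c^{ℓ̄})` (with real powers `Real.rpow`). -/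
theorem statement12 (c : ℝ) (hc0 : 0 < c) (hc1 : c < 1)
    (k : ℕ) (hk : 1 ≤ k) (ℓ : Fin k → ℝ) (hℓ : ∀ i, 0 < ℓ i)
    (ℓbar : ℝ) (hℓbar : ℓbar = (∑ i, ℓ i) / k) :
    -∑ i, Real.log (1 - c ^ ℓ i) ≥ -(k : ℝ) * Real.log (1 - c ^ ℓbar) := by
  have hk0 : (0 : ℝ) < k := by positivity
  have hlt : ∀ i : Fin k, c ^ ℓ i < 1 := fun i =>
    Real.rpow_lt_one hc0.le hc1 (hℓ i)
  have hpos : ∀ i : Fin k, 0 < 1 - c ^ ℓ i := fun i => by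
    have := hlt i; linarith
  have hne : (Finset.univ : Finset (Fin k)).Nonempty :=
    Finset.univ_nonempty_iff.mpr (Fin.pos_iff_nonempty.mp hk)
  have hℓbarpos : 0 < ℓbar := by
    rw [hℓbar]
    exact div_pos (Finset.sum_pos (fun i _ => hℓ i) hne) hk0
  have hltbar : c ^ ℓbar < 1 := Real.rpow_lt_one hc0.le hc1 hℓbarpos
  have hposbar : 0 < 1 - c ^ ℓbar := by linarith
  have hw : ∑ _i : Fin k, (1 / (k : ℝ)) = 1 := by
    rw [Finset.sum_const, Finset.card_univ, Fintype.card_fin, nsmul_eq_mul]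
    field_simp
  -- Step A : c^{ℓbar} ≤ (1/k) ∑ c^{ℓ i}  (AM-GM)
  have stepA : c ^ ℓbar ≤ ∑ i, (1 / (k : ℝ)) * c ^ ℓ i := by
    have h := Real.geom_mean_le_arith_mean_weighted Finset.univ
      (fun _ => 1 / (k : ℝ)) (fun i => c ^ ℓ i)
      (fun i _ => by positivity) hw
      (fun i _ => (Real.rpow_pos_of_pos hc0 _).le)
    have hprod : ∏ i : Fin k, (c ^ ℓ i) ^ (1 / (k : ℝ)) = c ^ ℓbar := by
      have h1 : ∀ i : Fin k, (c ^ ℓ i) ^ (1 / (k : ℝ)) = c ^ (ℓ i * (1 / (k : ℝ))) :=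
        fun i => (Real.rpow_mul hc0.le _ _).symm
      rw [Finset.prod_congr rfl (fun i _ => h1 i),
        ← Real.rpow_sum_of_pos hc0, ← Finset.sum_mul, hℓbar]
      ring_nf
    rw [hprod] at h
    exact h
  -- Step B : Jensen for log
  have hmean_lt : ∑ i, (1 / (k : ℝ)) * c ^ ℓ i < 1 := by
    calc ∑ i, (1 / (k : ℝ)) * c ^ ℓ i < ∑ _i : Fin k, (1 / (k : ℝ)) * 1 := by
          apply Finset.sum_lt_sum_of_nonempty hne
          intro i _
          exact mul_lt_mul_of_pos_left (hlt i) (by positivity)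
      _ = 1 := by rw [← Finset.sum_mul] at *; simp; field_simp
  have jensen := strictConcaveOn_log_Ioi.concaveOn.le_map_sum
    (t := Finset.univ) (w := fun _ : Fin k => 1 / (k : ℝ))
    (p := fun i => 1 - c ^ ℓ i)
    (fun i _ => by positivity) hw (fun i _ => hpos i)
  have hsum_eq : ∑ i : Fin k, (1 / (k : ℝ)) • (1 - c ^ ℓ i)
      = 1 - ∑ i, (1 / (k : ℝ)) * c ^ ℓ i := by
    simp only [smul_eq_mul, mul_sub, Finset.sum_sub_distrib, mul_one, hw]
  rw [hsum_eq] at jensen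
  have hmid : Real.log (1 - ∑ i, (1 / (k : ℝ)) * c ^ ℓ i)
      ≤ Real.log (1 - c ^ ℓbar) := by
    apply Real.log_le_log (by linarith)
    linarith
  have key : ∑ i : Fin k, (1 / (k : ℝ)) * Real.log (1 - c ^ ℓ i)
      ≤ Real.log (1 - c ^ ℓbar) := by
    simpa using jensen.trans hmid
  rw [← Finset.mul_sum] at key
  have : ∑ i, Real.log (1 - c ^ ℓ i) ≤ (k : ℝ) * Real.log (1 - c ^ ℓbar) := by
    rw [← div_le_iff₀' hk0]
    calc (∑ i, Real.log (1 - c ^ ℓ i)) / k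
        = (1 / (k : ℝ)) * ∑ i, Real.log (1 - c ^ ℓ i) := by ring
      _ ≤ _ := key
  linarith
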